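/- Let S be a set and τ ⊆ S. For each n ≥ 1 let F_n be a list of r_n ≥ 1 functions S → ℂ and G_n a list of s_n ≥ 1 functions S → ℂ, and let H_n be the concatenated list of the r_n + s_n functions of F_n followed by those of G_n. Let e^F_n, e^G_n, e^⊕_n be positive integers such that e^⊕_n / (r_n + s_n) → ∞, e^F_n / e^⊕_n → α, and e^G_n / e^⊕_n → β as n → ∞, with α, β ≥ 0. Assume t_{F_n}(τ) and t_{G_n}(τ) are finite for each n, and that A = limsup_n t_{F_n}(τ)^{1/e^F_n} and B = limsup_n t_{G_n}(τ)^{1/e^G_n} are finite and strictly positive. Then limsup_n t_{H_n}(τ)^{1/e^⊕_n} ≤ A^α · B^β. -/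

import Mathlib

open Filter Equiv Finset
open scoped ENNReal

/-- The Vandermonde supremum `t_{(m_1,…,m_N)}(τ)`: the supremum over all tuples
`z : ι → S` of points of `τ` of the absolute value of the generalized Vandermonde
determinant `det (m j (z i))`, valued in `[0, ∞]`. -/
noncomputable def vandSup {S ι : Type*} [Fintype ι] [DecidableEq ι]
    (τ : Set S) (m : ι → S → ℂ) : ℝ≥0∞ :=
  ⨆ (z : ι → S) (_ : ∀ i, z i ∈ τ),
    (‖(Matrix.of fun i j : ι => m j (z i)).det‖₊ : ℝ≥0∞)

lemma det_laplace_aux {r s : ℕ} (M : Matrix (Fin r ⊕ Fin s) (Fin r ⊕ Fin s) ℂ) :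
    (r.factorial * s.factorial : ℂ) * M.det =
      ∑ σ : Equiv.Perm (Fin r ⊕ Fin s),
        ((Equiv.Perm.sign σ : ℤ) : ℂ) *
          ((Matrix.of fun a b : Fin r => M (σ (Sum.inl a)) (Sum.inl b)).det *
           (Matrix.of fun a b : Fin s => M (σ (Sum.inr a)) (Sum.inr b)).det) := by
  classical
  have key : ∀ (π₁ : Perm (Fin r)) (π₂ : Perm (Fin s)),
      (∑ σ : Perm (Fin r ⊕ Fin s), ((Equiv.Perm.sign σ : ℤ) : ℂ) *
        ((∏ a, M (σ (Sum.inl (π₁ a))) (Sum.inl a)) *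
          ∏ a, M (σ (Sum.inr (π₂ a))) (Sum.inr a)))
      = (((Equiv.Perm.sign π₁ : ℤ) : ℂ) * ((Equiv.Perm.sign π₂ : ℤ) : ℂ)) * M.det := by
    intro π₁ π₂
    set e : Perm (Fin r ⊕ Fin s) := Equiv.sumCongr (π₁ : Perm (Fin r)) (π₂ : Perm (Fin s)) with he
    rw [Matrix.det_apply', Finset.mul_sum]
    refine (Fintype.sum_bijective (fun σ' : Perm (Fin r ⊕ Fin s) => σ' * e⁻¹)
      (Group.mulRight_bijective _) _ _ ?_).symm
    intro σ'
    have hsign : Equiv.Perm.sign (σ' * e⁻¹)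
        = Equiv.Perm.sign σ' * (Equiv.Perm.sign π₁ * Equiv.Perm.sign π₂) := by
      rw [Equiv.Perm.sign_mul, Equiv.Perm.sign_inv, he, Equiv.Perm.sign_sumCongr]
    have hprod : ∏ i, M (σ' i) i =
        (∏ a, M ((σ' * e⁻¹) (Sum.inl (π₁ a))) (Sum.inl a)) *
          ∏ a, M ((σ' * e⁻¹) (Sum.inr (π₂ a))) (Sum.inr a) := by
      rw [Fintype.prod_sum_type]
      congr 1 <;> refine Finset.prod_congr rfl fun a _ => ?_ <;>
        simp [he, Equiv.Perm.mul_apply]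
    rw [hsign, hprod]
    push_cast
    ring
  -- now expand the RHS determinants
  have expand : ∀ σ : Perm (Fin r ⊕ Fin s),
      ((Equiv.Perm.sign σ : ℤ) : ℂ) *
          ((Matrix.of fun a b : Fin r => M (σ (Sum.inl a)) (Sum.inl b)).det *
           (Matrix.of fun a b : Fin s => M (σ (Sum.inr a)) (Sum.inr b)).det)
        = ∑ π₁ : Perm (Fin r), ∑ π₂ : Perm (Fin s),
            (((Equiv.Perm.sign π₁ : ℤ) : ℂ) * ((Equiv.Perm.sign π₂ : ℤ) : ℂ)) *
            (((Equiv.Perm.sign σ : ℤ) : ℂ) *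
              ((∏ a, M (σ (Sum.inl (π₁ a))) (Sum.inl a)) *
                ∏ a, M (σ (Sum.inr (π₂ a))) (Sum.inr a))) := by
    intro σ
    rw [Matrix.det_apply', Matrix.det_apply', Finset.sum_mul_sum, Finset.mul_sum]
    refine Finset.sum_congr rfl fun π₁ _ => ?_
    rw [Finset.mul_sum]
    refine Finset.sum_congr rfl fun π₂ _ => ?_
    simp only [Matrix.of_apply]
    ring
  rw [Finset.sum_congr rfl fun σ _ => expand σ]
  rw [Finset.sum_comm]
  have : ∀ π₁ : Perm (Fin r),
      (∑ σ : Perm (Fin r ⊕ Fin s), ∑ π₂ : Perm (Fin s),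
        (((Equiv.Perm.sign π₁ : ℤ) : ℂ) * ((Equiv.Perm.sign π₂ : ℤ) : ℂ)) *
          (((Equiv.Perm.sign σ : ℤ) : ℂ) *
            ((∏ a, M (σ (Sum.inl (π₁ a))) (Sum.inl a)) *
              ∏ a, M (σ (Sum.inr (π₂ a))) (Sum.inr a))))
      = (s.factorial : ℂ) * M.det := by
    intro π₁
    rw [Finset.sum_comm]
    have inner : ∀ π₂ : Perm (Fin s),
        (∑ σ : Perm (Fin r ⊕ Fin s),
          (((Equiv.Perm.sign π₁ : ℤ) : ℂ) * ((Equiv.Perm.sign π₂ : ℤ) : ℂ)) *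
            (((Equiv.Perm.sign σ : ℤ) : ℂ) *
              ((∏ a, M (σ (Sum.inl (π₁ a))) (Sum.inl a)) *
                ∏ a, M (σ (Sum.inr (π₂ a))) (Sum.inr a))))
        = M.det := by
      intro π₂
      rw [← Finset.mul_sum, key π₁ π₂, ← mul_assoc]
      have h1 : (((Equiv.Perm.sign π₁ : ℤ) : ℂ)) * ((Equiv.Perm.sign π₁ : ℤ) : ℂ) = 1 := by
        rcases Int.units_eq_one_or (Equiv.Perm.sign π₁) with h | h <;> rw [h] <;> norm_num
      have h2 : (((Equiv.Perm.sign π₂ : ℤ) : ℂ)) * ((Equiv.Perm.sign π₂ : ℤ) : ℂ) = 1 := by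
        rcases Int.units_eq_one_or (Equiv.Perm.sign π₂) with h | h <;> rw [h] <;> norm_num
      calc ((Equiv.Perm.sign π₁ : ℤ) : ℂ) * ((Equiv.Perm.sign π₂ : ℤ) : ℂ) *
            (((Equiv.Perm.sign π₁ : ℤ) : ℂ) * ((Equiv.Perm.sign π₂ : ℤ) : ℂ)) * M.det
          = ((((Equiv.Perm.sign π₁ : ℤ) : ℂ) * ((Equiv.Perm.sign π₁ : ℤ) : ℂ)) *
              ((((Equiv.Perm.sign π₂ : ℤ) : ℂ) * ((Equiv.Perm.sign π₂ : ℤ) : ℂ)))) * M.det := by ring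
        _ = M.det := by rw [h1, h2, one_mul, one_mul]
    rw [Finset.sum_congr rfl fun π₂ _ => inner π₂]
    simp [Finset.card_univ, Fintype.card_perm]
  rw [Finset.sum_congr rfl fun π₁ _ => this π₁]
  simp [Finset.card_univ, Fintype.card_perm, mul_assoc]

lemma nnnorm_det_le_vandSup {S ι : Type*} [Fintype ι] [DecidableEq ι]
    (τ : Set S) (m : ι → S → ℂ) (z : ι → S) (hz : ∀ i, z i ∈ τ) :
    (‖(Matrix.of fun i j : ι => m j (z i)).det‖₊ : ℝ≥0∞) ≤ vandSup τ m :=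
  le_iSup_of_le z (le_iSup_of_le hz le_rfl)

lemma vandSup_sumElim_le {S : Type*} (τ : Set S) {r s : ℕ}
    (F : Fin r → S → ℂ) (G : Fin s → S → ℂ) :
    vandSup τ (Sum.elim F G) ≤
      (((r + s).choose r : ℕ) : ℝ≥0∞) * (vandSup τ F * vandSup τ G) := by
  classical
  rw [vandSup]
  refine iSup_le fun z => iSup_le fun hz => ?_
  set M : Matrix (Fin r ⊕ Fin s) (Fin r ⊕ Fin s) ℂ :=
    Matrix.of fun i j => Sum.elim F G j (z i) with hM
  have term_le : ∀ σ : Perm (Fin r ⊕ Fin s),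
      (‖((Equiv.Perm.sign σ : ℤ) : ℂ) *
          ((Matrix.of fun a b : Fin r => M (σ (Sum.inl a)) (Sum.inl b)).det *
           (Matrix.of fun a b : Fin s => M (σ (Sum.inr a)) (Sum.inr b)).det)‖₊ : ℝ≥0∞)
        ≤ vandSup τ F * vandSup τ G := by
    intro σ
    have hsig : ‖((Equiv.Perm.sign σ : ℤ) : ℂ)‖₊ = 1 := by
      rcases Int.units_eq_one_or (Equiv.Perm.sign σ) with h | h <;> rw [h] <;> norm_num
    rw [nnnorm_mul, hsig, one_mul, nnnorm_mul, ENNReal.coe_mul]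
    have h1 : (Matrix.of fun a b : Fin r => M (σ (Sum.inl a)) (Sum.inl b))
        = Matrix.of fun a b : Fin r => F b (z (σ (Sum.inl a))) := rfl
    have h2 : (Matrix.of fun a b : Fin s => M (σ (Sum.inr a)) (Sum.inr b))
        = Matrix.of fun a b : Fin s => G b (z (σ (Sum.inr a))) := rfl
    rw [h1, h2]
    exact mul_le_mul'
      (nnnorm_det_le_vandSup τ F _ fun a => hz _)
      (nnnorm_det_le_vandSup τ G _ fun a => hz _)
  have hfacpos : ((r.factorial * s.factorial : ℕ) : ℝ≥0∞) ≠ 0 := by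
    simp [Nat.factorial_ne_zero]
  have hfactop : ((r.factorial * s.factorial : ℕ) : ℝ≥0∞) ≠ ⊤ := ENNReal.natCast_ne_top _
  rw [← ENNReal.mul_le_mul_iff_right hfacpos hfactop]
  calc ((r.factorial * s.factorial : ℕ) : ℝ≥0∞) * (‖M.det‖₊ : ℝ≥0∞)
      = (‖((r.factorial * s.factorial : ℕ) : ℂ) * M.det‖₊ : ℝ≥0∞) := by
        rw [nnnorm_mul, ENNReal.coe_mul, RCLike.nnnorm_natCast]
        norm_cast
    _ = (‖∑ σ : Perm (Fin r ⊕ Fin s),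
          ((Equiv.Perm.sign σ : ℤ) : ℂ) *
            ((Matrix.of fun a b : Fin r => M (σ (Sum.inl a)) (Sum.inl b)).det *
             (Matrix.of fun a b : Fin s => M (σ (Sum.inr a)) (Sum.inr b)).det)‖₊ : ℝ≥0∞) := by
        congr 2
        push_cast
        exact det_laplace_aux M
    _ ≤ ∑ σ : Perm (Fin r ⊕ Fin s),
          (‖((Equiv.Perm.sign σ : ℤ) : ℂ) *
            ((Matrix.of fun a b : Fin r => M (σ (Sum.inl a)) (Sum.inl b)).det *
             (Matrix.of fun a b : Fin s => M (σ (Sum.inr a)) (Sum.inr b)).det)‖₊ : ℝ≥0∞) := by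
        rw [← ENNReal.coe_finset_sum]
        exact_mod_cast nnnorm_sum_le _ _
    _ ≤ ∑ _σ : Perm (Fin r ⊕ Fin s), vandSup τ F * vandSup τ G :=
        Finset.sum_le_sum fun σ _ => term_le σ
    _ = (((r + s).factorial : ℕ) : ℝ≥0∞) * (vandSup τ F * vandSup τ G) := by
        rw [Finset.sum_const, Finset.card_univ, Fintype.card_perm]
        simp [Fintype.card_sum, nsmul_eq_mul]
    _ = ((r.factorial * s.factorial : ℕ) : ℝ≥0∞) *
          ((((r + s).choose r : ℕ) : ℝ≥0∞) * (vandSup τ F * vandSup τ G)) := by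
        have h := Nat.choose_mul_factorial_mul_factorial (Nat.le_add_right r s)
        rw [Nat.add_sub_cancel_left] at h
        have hfac : (((r + s).factorial : ℕ) : ℝ≥0∞)
            = ((r.factorial * s.factorial : ℕ) : ℝ≥0∞) * (((r + s).choose r : ℕ) : ℝ≥0∞) := by
          rw [← Nat.cast_mul]
          congr 1
          rw [← h]; ring
        rw [hfac, mul_assoc]

/-- Tendsto of `x ^ a n` in `ℝ≥0∞` for fixed finite positive base and converging real exponents. -/
lemma tendsto_ennreal_rpow_exp {x : ℝ≥0∞} (hx0 : x ≠ 0) (hxt : x ≠ ⊤)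
    {a : ℕ → ℝ} {L : ℝ} (ha : Tendsto a atTop (nhds L)) :
    Tendsto (fun n => x ^ a n) atTop (nhds (x ^ L)) := by
  have hxR : 0 < x.toReal := ENNReal.toReal_pos hx0 hxt
  have hrepr : ∀ y : ℝ, x ^ y = ENNReal.ofReal (x.toReal ^ y) := fun y => by
    conv_lhs => rw [← ENNReal.ofReal_toReal hxt]
    rw [← ENNReal.ofReal_rpow_of_pos hxR]

  simp_rw [hrepr]
  refine (ENNReal.continuous_ofReal.tendsto _).comp ?_
  have hre : ∀ y : ℝ, x.toReal ^ y = Real.exp (Real.log x.toReal * y) := fun y =>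
    Real.rpow_def_of_pos hxR y
  simp_rw [hre]
  exact (Real.continuous_exp.tendsto _).comp (ha.const_mul _)

lemma nat_choose_le_two_pow {n k : ℕ} (h : k ≤ n) : n.choose k ≤ 2 ^ n := by
  rw [← Nat.sum_range_choose n]
  exact Finset.single_le_sum (fun i _ => Nat.zero_le _)
    (Finset.mem_range.mpr (Nat.lt_succ_of_le h))

/-- Upper bound for the supremal transfinite diameter of direct
sums (concatenated lists): `limsup t_{H_n}(τ)^{1/e^⊕_n} ≤ A^α · B^β`. -/
theorem limsup_vandSup_directSum_le
    {S : Type*} (τ : Set S) (r s : ℕ → ℕ)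
    (hr : ∀ n, 1 ≤ r n) (hs : ∀ n, 1 ≤ s n)
    (F : ∀ n, Fin (r n) → S → ℂ) (G : ∀ n, Fin (s n) → S → ℂ)
    (eF eG eS : ℕ → ℕ)
    (heF : ∀ n, 0 < eF n) (heG : ∀ n, 0 < eG n) (heS : ∀ n, 0 < eS n)
    (hgrow : Tendsto (fun n => (eS n : ℝ) / ((r n : ℝ) + (s n : ℝ))) atTop atTop)
    (α β : ℝ) (hα : 0 ≤ α) (hβ : 0 ≤ β)
    (hαlim : Tendsto (fun n => (eF n : ℝ) / (eS n : ℝ)) atTop (nhds α))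
    (hβlim : Tendsto (fun n => (eG n : ℝ) / (eS n : ℝ)) atTop (nhds β))
    (hFfin : ∀ n, vandSup τ (F n) ≠ ⊤) (hGfin : ∀ n, vandSup τ (G n) ≠ ⊤)
    (A B : ℝ≥0∞)
    (hA : A = limsup (fun n => vandSup τ (F n) ^ (1 / (eF n : ℝ))) atTop)
    (hB : B = limsup (fun n => vandSup τ (G n) ^ (1 / (eG n : ℝ))) atTop)
    (hA0 : 0 < A) (hAtop : A ≠ ⊤) (hB0 : 0 < B) (hBtop : B ≠ ⊤) :
    limsup (fun n =>
        vandSup τ (Sum.elim (F n) (G n) : Fin (r n) ⊕ Fin (s n) → S → ℂ)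
          ^ (1 / (eS n : ℝ))) atTop
      ≤ A ^ α * B ^ β := by
  set u : ℕ → ℝ≥0∞ := fun n =>
    vandSup τ (Sum.elim (F n) (G n) : Fin (r n) ⊕ Fin (s n) → S → ℂ)
      ^ (1 / (eS n : ℝ)) with hu
  have heSR : ∀ n, (0:ℝ) < (eS n : ℝ) := fun n => by exact_mod_cast heS n
  have heFR : ∀ n, (0:ℝ) < (eF n : ℝ) := fun n => by exact_mod_cast heF n
  have heGR : ∀ n, (0:ℝ) < (eG n : ℝ) := fun n => by exact_mod_cast heG n
  have hexp0 : Tendsto (fun n => ((r n : ℝ) + (s n : ℝ)) / (eS n : ℝ)) atTop (nhds 0) := by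
    have h := hgrow.inv_tendsto_atTop
    refine h.congr fun n => ?_
    simp [inv_div]
  have key : ∀ c : ℝ≥0∞, 1 < c → c ≠ ⊤ →
      limsup u atTop ≤ (A * c) ^ α * (B * c) ^ β := by
    intro c hc1 hct
    have hc0 : c ≠ 0 := (lt_trans zero_lt_one hc1).ne'
    have hAc0 : A * c ≠ 0 := mul_ne_zero hA0.ne' hc0
    have hAct : A * c ≠ ⊤ := ENNReal.mul_ne_top hAtop hct
    have hBc0 : B * c ≠ 0 := mul_ne_zero hB0.ne' hc0
    have hBct : B * c ≠ ⊤ := ENNReal.mul_ne_top hBtop hct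
    have hlimA : limsup (fun n => vandSup τ (F n) ^ (1 / (eF n : ℝ))) atTop < A * c := by
      rw [← hA]
      conv_lhs => rw [← mul_one A]
      exact ENNReal.mul_lt_mul_right hA0.ne' hAtop hc1
    have hFev : ∀ᶠ n in atTop, vandSup τ (F n) ^ (1 / (eF n : ℝ)) < A * c :=
      Filter.eventually_lt_of_limsup_lt hlimA
    have hlimB : limsup (fun n => vandSup τ (G n) ^ (1 / (eG n : ℝ))) atTop < B * c := by
      rw [← hB]
      conv_lhs => rw [← mul_one B]
      exact ENNReal.mul_lt_mul_right hB0.ne' hBtop hc1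
    have hGev : ∀ᶠ n in atTop, vandSup τ (G n) ^ (1 / (eG n : ℝ)) < B * c :=
      Filter.eventually_lt_of_limsup_lt hlimB
    have hle : ∀ᶠ n in atTop, u n ≤
        (2:ℝ≥0∞) ^ (((r n : ℝ) + (s n : ℝ)) / (eS n : ℝ)) *
          ((A*c) ^ ((eF n : ℝ)/(eS n : ℝ)) * (B*c) ^ ((eG n : ℝ)/(eS n : ℝ))) := by
      filter_upwards [hFev, hGev] with n hFn hGn
      have hS0 : (eS n : ℝ) ≠ 0 := (heSR n).ne'
      have hF0 : (eF n : ℝ) ≠ 0 := (heFR n).ne'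
      have hG0 : (eG n : ℝ) ≠ 0 := (heGR n).ne'
      have hstep1 : vandSup τ (Sum.elim (F n) (G n) : Fin (r n) ⊕ Fin (s n) → S → ℂ) ≤
          ((2:ℝ≥0∞) ^ (r n + s n : ℕ)) * (vandSup τ (F n) * vandSup τ (G n)) := by
        refine le_trans (vandSup_sumElim_le τ (F n) (G n)) ?_
        refine mul_le_mul' ?_ le_rfl
        have h2 : ((r n + s n).choose (r n)) ≤ 2 ^ (r n + s n) :=
          nat_choose_le_two_pow (Nat.le_add_right _ _)
        calc (((r n + s n).choose (r n) : ℕ) : ℝ≥0∞)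
            ≤ ((2 ^ (r n + s n) : ℕ) : ℝ≥0∞) := by exact_mod_cast h2
          _ = (2:ℝ≥0∞) ^ (r n + s n) := by push_cast; ring
      have hmono := ENNReal.rpow_le_rpow hstep1 (by positivity : (0:ℝ) ≤ 1/(eS n:ℝ))
      have e1 : (((2:ℝ≥0∞) ^ (r n + s n : ℕ)) *
            (vandSup τ (F n) * vandSup τ (G n))) ^ (1/(eS n:ℝ))
          = (2:ℝ≥0∞) ^ (((r n:ℝ)+(s n:ℝ))/(eS n:ℝ)) *
            (vandSup τ (F n) ^ (1/(eS n:ℝ)) * vandSup τ (G n) ^ (1/(eS n:ℝ))) := by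
        rw [ENNReal.mul_rpow_of_nonneg _ _ (by positivity),
          ENNReal.mul_rpow_of_nonneg _ _ (by positivity)]
        congr 1
        rw [← ENNReal.rpow_natCast 2 (r n + s n), ← ENNReal.rpow_mul]
        congr 1
        push_cast
        rw [mul_one_div]
      have e2 : vandSup τ (F n) ^ (1/(eS n:ℝ))
          = (vandSup τ (F n) ^ (1/(eF n:ℝ))) ^ ((eF n:ℝ)/(eS n:ℝ)) := by
        rw [← ENNReal.rpow_mul]
        congr 1
        field_simp
      have e3 : vandSup τ (G n) ^ (1/(eS n:ℝ))
          = (vandSup τ (G n) ^ (1/(eG n:ℝ))) ^ ((eG n:ℝ)/(eS n:ℝ)) := by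
        rw [← ENNReal.rpow_mul]
        congr 1
        field_simp
      calc u n ≤ (((2:ℝ≥0∞) ^ (r n + s n : ℕ)) *
              (vandSup τ (F n) * vandSup τ (G n))) ^ (1/(eS n:ℝ)) := hmono
        _ = (2:ℝ≥0∞) ^ (((r n:ℝ)+(s n:ℝ))/(eS n:ℝ)) *
              ((vandSup τ (F n) ^ (1/(eF n:ℝ))) ^ ((eF n:ℝ)/(eS n:ℝ)) *
               (vandSup τ (G n) ^ (1/(eG n:ℝ))) ^ ((eG n:ℝ)/(eS n:ℝ))) := by
            rw [e1, e2, e3]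
        _ ≤ (2:ℝ≥0∞) ^ (((r n:ℝ)+(s n:ℝ))/(eS n:ℝ)) *
              ((A*c) ^ ((eF n : ℝ)/(eS n : ℝ)) * (B*c) ^ ((eG n : ℝ)/(eS n : ℝ))) := by
            refine mul_le_mul' le_rfl (mul_le_mul' ?_ ?_)
            · exact ENNReal.rpow_le_rpow hFn.le (by positivity)
            · exact ENNReal.rpow_le_rpow hGn.le (by positivity)
    have hvlim : Tendsto (fun n => (2:ℝ≥0∞) ^ (((r n : ℝ) + (s n : ℝ)) / (eS n : ℝ)) *
          ((A*c) ^ ((eF n : ℝ)/(eS n : ℝ)) * (B*c) ^ ((eG n : ℝ)/(eS n : ℝ))))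
        atTop (nhds (1 * ((A*c)^α * (B*c)^β))) := by
      have h2 : Tendsto (fun n => (2:ℝ≥0∞) ^ (((r n:ℝ)+(s n:ℝ))/(eS n:ℝ))) atTop (nhds 1) := by
        have := tendsto_ennreal_rpow_exp (x := (2:ℝ≥0∞)) (by norm_num) (by norm_num) hexp0
        simpa using this
      have hA' : Tendsto (fun n => (A*c) ^ ((eF n : ℝ)/(eS n : ℝ))) atTop (nhds ((A*c)^α)) :=
        tendsto_ennreal_rpow_exp hAc0 hAct hαlim
      have hB' : Tendsto (fun n => (B*c) ^ ((eG n : ℝ)/(eS n : ℝ))) atTop (nhds ((B*c)^β)) :=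
        tendsto_ennreal_rpow_exp hBc0 hBct hβlim
      have hApos : (A*c)^α ≠ 0 := (ENNReal.rpow_pos (pos_iff_ne_zero.mpr hAc0) hAct).ne'
      have hAfin : (A*c)^α ≠ ⊤ := ENNReal.rpow_ne_top_of_nonneg hα hAct
      have hBpos : (B*c)^β ≠ 0 := (ENNReal.rpow_pos (pos_iff_ne_zero.mpr hBc0) hBct).ne'
      have hBfin : (B*c)^β ≠ ⊤ := ENNReal.rpow_ne_top_of_nonneg hβ hBct
      refine ENNReal.Tendsto.mul h2 (Or.inl one_ne_zero)
        (ENNReal.Tendsto.mul hA' (Or.inl hApos) hB' (Or.inl hBpos)) ?_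
      exact Or.inl (mul_ne_zero hApos hBpos)
    calc limsup u atTop
        ≤ limsup (fun n => (2:ℝ≥0∞) ^ (((r n : ℝ) + (s n : ℝ)) / (eS n : ℝ)) *
            ((A*c) ^ ((eF n : ℝ)/(eS n : ℝ)) * (B*c) ^ ((eG n : ℝ)/(eS n : ℝ)))) atTop :=
          limsup_le_limsup hle
      _ = 1 * ((A*c)^α * (B*c)^β) := hvlim.limsup_eq
      _ = (A*c)^α * (B*c)^β := one_mul _
  -- now let c ↓ 1
  have hck : ∀ k : ℕ, limsup u atTop ≤
      (A^α * B^β) * (ENNReal.ofReal (1 + 1/((k:ℝ)+1))) ^ (α+β) := by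
    intro k
    have hpos : (0:ℝ) < 1 + 1/((k:ℝ)+1) := by positivity
    have h1 : (1:ℝ≥0∞) < ENNReal.ofReal (1 + 1/((k:ℝ)+1)) := by
      rw [ENNReal.one_lt_ofReal]
      have : (0:ℝ) < 1/((k:ℝ)+1) := by positivity
      linarith
    have hc0 : ENNReal.ofReal (1 + 1/((k:ℝ)+1)) ≠ 0 := (ENNReal.ofReal_pos.mpr hpos).ne'
    refine le_trans (key _ h1 ENNReal.ofReal_ne_top) ?_
    rw [ENNReal.mul_rpow_of_nonneg _ _ hα, ENNReal.mul_rpow_of_nonneg _ _ hβ,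
      ENNReal.rpow_add α β hc0 ENNReal.ofReal_ne_top]
    ring_nf
    exact le_rfl
  have hclim : Tendsto (fun k : ℕ =>
      (A^α * B^β) * (ENNReal.ofReal (1 + 1/((k:ℝ)+1))) ^ (α+β)) atTop
      (nhds ((A^α * B^β) * 1)) := by
    refine ENNReal.Tendsto.const_mul ?_ (Or.inl one_ne_zero)
    have hbase : Tendsto (fun k : ℕ => (1 + 1/((k:ℝ)+1))) atTop (nhds 1) := by
      have h := tendsto_one_div_add_atTop_nhds_zero_nat (𝕜 := ℝ)
      have h2 : Tendsto (fun k : ℕ => 1 + 1/((k:ℝ)+1)) atTop (nhds (1+0)) :=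
        Tendsto.const_add 1 h
      simpa using h2
    have hreal : Tendsto (fun k : ℕ => (1 + 1/((k:ℝ)+1)) ^ (α+β)) atTop (nhds 1) := by
      have hc : ContinuousAt (fun x : ℝ => x ^ (α+β)) 1 :=
        Real.continuousAt_rpow_const 1 (α+β) (Or.inl one_ne_zero)
      have := hc.tendsto.comp hbase
      simpa [Function.comp_def, Real.one_rpow] using this
    have hof : Tendsto (fun k : ℕ => ENNReal.ofReal ((1 + 1/((k:ℝ)+1)) ^ (α+β)))
        atTop (nhds 1) := by
      have := (ENNReal.continuous_ofReal.tendsto 1).comp hreal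
      simpa [Function.comp_def] using this
    refine hof.congr fun k => ?_
    rw [← ENNReal.ofReal_rpow_of_pos (by positivity)]
  have hfinal := ge_of_tendsto' hclim hck
  simpa using hfinal
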